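/- Let P be an L-convex polyomino. Then there exists a Ferrer diagram P* (a polyomino whose rows are left-justified with weakly decreasing lengths) such that the row-column bipartite graph F_P of P is isomorphic to F_{P*}; namely, P* is the Ferrer diagram whose row lengths are the entries of H_P sorted in weakly decreasing order and whose column lengths are the entries of V_P sorted in weakly decreasing order. -/

import Mathlib

/-- Two cells of `ℤ × ℤ` are adjacent if they share an edge. -/
def CellAdj (a b : ℤ × ℤ) : Prop :=
  (a.1 = b.1 ∧ (a.2 = b.2 + 1 ∨ b.2 = a.2 + 1)) ∨
  (a.2 = b.2 ∧ (a.1 = b.1 + 1 ∨ b.1 = a.1 + 1))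

/-- `P` is an L-convex polyomino: it is row convex, column convex, and any two of
its cells are joined by a path of distinct cells of `P` with at most one change of
direction. Cells are recorded as `(row, column)`. -/
def IsLConvex (P : Finset (ℤ × ℤ)) : Prop :=
  (∀ i j j' j'' : ℤ, (i, j) ∈ P → (i, j'') ∈ P → j ≤ j' → j' ≤ j'' → (i, j') ∈ P) ∧
  (∀ i i' i'' j : ℤ, (i, j) ∈ P → (i'', j) ∈ P → i ≤ i' → i' ≤ i'' → (i', j) ∈ P) ∧
  (∀ a ∈ P, ∀ b ∈ P, ∃ (k : ℕ) (c : ℕ → ℤ × ℤ),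
    c 0 = a ∧ c k = b ∧ (∀ i ≤ k, c i ∈ P) ∧
    (∀ i < k, CellAdj (c i) (c (i + 1))) ∧
    (∀ i j, i ≤ k → j ≤ k → c i = c j → i = j) ∧
    ((Finset.Ioo 0 k).filter (fun i =>
      (c (i - 1)).1 ≠ (c (i + 1)).1 ∧ (c (i - 1)).2 ≠ (c (i + 1)).2)).card ≤ 1)

/-- Number of cells of `P` in row `i`. -/
def rowCount (P : Finset (ℤ × ℤ)) (i : ℤ) : ℕ := (P.filter (fun c => c.1 = i)).card

/-- Number of cells of `P` in column `j`. -/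
def colCount (P : Finset (ℤ × ℤ)) (j : ℤ) : ℕ := (P.filter (fun c => c.2 = j)).card

/-- The multiset of row lengths of `P` (one entry per occupied row). -/
def rowMultiset (P : Finset (ℤ × ℤ)) : Multiset ℕ :=
  (P.image Prod.fst).val.map (rowCount P)

/-- The multiset of column lengths of `P` (one entry per occupied column). -/
def colMultiset (P : Finset (ℤ × ℤ)) : Multiset ℕ :=
  (P.image Prod.snd).val.map (colCount P)

/-- The Ferrer diagram (as a set of cells in `ℤ × ℤ`) with `n` left-justified
rows, row `i` (0-based) having `h i` cells. -/
def ferrerCellsZ (n : ℕ) (h : ℕ → ℕ) : Finset (ℤ × ℤ) :=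
  (Finset.range n).biUnion
    (fun i => (Finset.range (h i)).image (fun (j : ℕ) => ((i : ℤ), (j : ℤ))))

open Finset in
lemma cross_of_LConvex {P : Finset (ℤ × ℤ)} (hP : IsLConvex P) {i j i' j' : ℤ}
    (h1 : (i, j) ∈ P) (h2 : (i', j') ∈ P) : (i, j') ∈ P ∨ (i', j) ∈ P := by
  classical
  obtain ⟨k, c, hc0, hck, hmem, hadj, -, hturn⟩ := hP.2.2 _ h1 _ h2
  set Hor : ℕ → Prop := fun t => (c t).1 = (c (t+1)).1 with hHordef
  have hstep : ∀ t, t < k →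
      (Hor t ∧ (c t).2 ≠ (c (t+1)).2) ∨ (¬ Hor t ∧ (c t).2 = (c (t+1)).2) := by
    intro t ht
    rcases hadj t ht with ⟨ha, hb⟩ | ⟨ha, hb⟩
    · exact Or.inl ⟨ha, by omega⟩
    · exact Or.inr ⟨by simp only [hHordef]; omega, ha⟩
  have hturnmem : ∀ t, 0 < t → t < k → ¬ (Hor (t-1) ↔ Hor t) →
      t ∈ (Finset.Ioo 0 k).filter (fun s =>
        (c (s - 1)).1 ≠ (c (s + 1)).1 ∧ (c (s - 1)).2 ≠ (c (s + 1)).2) := by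
    intro t ht0 htk hne
    have htm : t - 1 + 1 = t := by omega
    have e1 := hadj (t-1) (by omega)
    rw [htm] at e1
    have e2 := hadj t htk
    have hne2 : ((c (t-1)).1 = (c t).1 ∧ ¬ (c t).1 = (c (t+1)).1) ∨
        (¬ (c (t-1)).1 = (c t).1 ∧ (c t).1 = (c (t+1)).1) := by
      simp only [hHordef, htm] at hne; tauto
    simp only [Finset.mem_filter, Finset.mem_Ioo]
    unfold CellAdj at e1 e2
    refine ⟨⟨ht0, htk⟩, ?_, ?_⟩ <;> omega
  have two_turns : ∀ s t, 0 < s → s < t → t < k → ¬(Hor (s-1) ↔ Hor s) →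
      ¬(Hor (t-1) ↔ Hor t) → False := by
    intro s t hs hst htk hns hnt
    have m1 := hturnmem s hs (by omega) hns
    have m2 := hturnmem t (by omega) htk hnt
    have hsub : ({s, t} : Finset ℕ) ⊆ (Finset.Ioo 0 k).filter (fun u =>
        (c (u - 1)).1 ≠ (c (u + 1)).1 ∧ (c (u - 1)).2 ≠ (c (u + 1)).2) := by
      intro x hx
      rcases Finset.mem_insert.mp hx with rfl | hx
      · exact m1
      · rcases Finset.mem_singleton.mp hx with rfl; exact m2
    have hc2 : ({s, t} : Finset ℕ).card = 2 := Finset.card_pair (by omega)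
    have := Finset.card_le_card hsub
    omega
  have const1 : ∀ a b : ℕ, (∀ s, a ≤ s → s < b → (c s).1 = (c (s+1)).1) →
      ∀ s, a ≤ s → s ≤ b → (c s).1 = (c a).1 := by
    intro a b hseg s hs
    induction s, hs using Nat.le_induction with
    | base => intro _; rfl
    | succ s hs ih => intro hsb; rw [← hseg s hs (by omega)]; exact ih (by omega)
  have const2 : ∀ a b : ℕ, (∀ s, a ≤ s → s < b → (c s).2 = (c (s+1)).2) →
      ∀ s, a ≤ s → s ≤ b → (c s).2 = (c a).2 := by
    intro a b hseg s hs
    induction s, hs using Nat.le_induction with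
    | base => intro _; rfl
    | succ s hs ih => intro hsb; rw [← hseg s hs (by omega)]; exact ih (by omega)
  rcases Nat.eq_zero_or_pos k with hk0 | hkpos
  · have hab : (i, j) = (i', j') := by rw [← hc0, ← hck, hk0]
    have e1 : i = i' := congrArg Prod.fst hab
    have e2 : j = j' := congrArg Prod.snd hab
    left; rw [← e2]; exact h1
  · by_cases h0 : Hor 0
    · by_cases hex : ∃ t, t < k ∧ ¬ Hor t
      · set T := (Finset.range k).filter (fun t => ¬ Hor t) with hT
        have hTne : T.Nonempty := by
          obtain ⟨t, ht1, ht2⟩ := hex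
          exact ⟨t, Finset.mem_filter.mpr ⟨Finset.mem_range.mpr ht1, ht2⟩⟩
        set t := T.min' hTne with ht
        have htT : t ∈ T := Finset.min'_mem _ _
        have htk : t < k := by
          have := (Finset.mem_filter.mp htT).1; simpa using this
        have hnt : ¬ Hor t := (Finset.mem_filter.mp htT).2
        have htmin : ∀ s, s < t → Hor s := by
          intro s h1s
          by_contra hcs
          have hsT : s ∈ T := Finset.mem_filter.mpr ⟨Finset.mem_range.mpr (by omega), hcs⟩
          have := Finset.min'_le T s hsT; omega
        have ht0 : 0 < t := by
          rcases Nat.eq_zero_or_pos t with h | h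
          · rw [h] at hnt; exact absurd h0 hnt
          · exact h
        have hseg2 : ∀ s, t ≤ s → s < k → ¬ Hor s := by
          by_contra hcon
          push_neg at hcon
          obtain ⟨s, hts, hsk, hs⟩ := hcon
          set T2 := (Finset.Ioo t k).filter (fun u => Hor u) with hT2
          have hT2ne : T2.Nonempty := by
            refine ⟨s, Finset.mem_filter.mpr ⟨Finset.mem_Ioo.mpr ⟨?_, hsk⟩, hs⟩⟩
            rcases eq_or_lt_of_le hts with rfl | h; · exact absurd hs hnt
            · exact h
          set s0 := T2.min' hT2ne with hs0
          have hs0T : s0 ∈ T2 := Finset.min'_mem _ _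
          have hs0mem := Finset.mem_filter.mp hs0T
          have hs0Ioo := Finset.mem_Ioo.mp hs0mem.1
          have hs0H : Hor s0 := hs0mem.2
          have hprev : ¬ Hor (s0 - 1) := by
            rcases Nat.eq_or_lt_of_le (Nat.succ_le_of_lt hs0Ioo.1) with h | h
            · have : s0 - 1 = t := by omega
              rw [this]; exact hnt
            · intro hcH
              have : s0 - 1 ∈ T2 := Finset.mem_filter.mpr
                ⟨Finset.mem_Ioo.mpr ⟨by omega, by omega⟩, hcH⟩
              have := Finset.min'_le T2 _ this; omega
          exact two_turns t s0 ht0 hs0Ioo.1 hs0Ioo.2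
            (by intro hiff; exact hnt (hiff.mp (htmin (t-1) (by omega))))
            (by intro hiff; exact hprev (hiff.mpr hs0H))
        have hr : (c t).1 = (c 0).1 :=
          const1 0 t (fun s _ h2s => htmin s h2s) t (Nat.zero_le _) le_rfl
        have hcol : (c k).2 = (c t).2 := by
          refine const2 t k (fun s hs1 hs2 => ?_) k (le_of_lt htk) le_rfl
          rcases hstep s hs2 with ⟨hH, _⟩ | ⟨_, hE⟩
          · exact absurd hH (hseg2 s hs1 hs2)
          · exact hE
        have hct : c t = (i, j') := by
          have e1 : (c t).1 = i := by rw [hr, hc0]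
          have e2 : (c t).2 = j' := by rw [← hcol, hck]
          exact Prod.ext e1 e2
        left; rw [← hct]; exact hmem t (le_of_lt htk)
      · push_neg at hex
        have : (c k).1 = (c 0).1 := const1 0 k (fun s _ h2s => hex s h2s) k (Nat.zero_le _) le_rfl
        rw [hck, hc0] at this
        have e : i' = i := this
        right; rw [e]; exact h1
    · by_cases hex : ∃ t, t < k ∧ Hor t
      · set T := (Finset.range k).filter (fun t => Hor t) with hT
        have hTne : T.Nonempty := by
          obtain ⟨t, ht1, ht2⟩ := hex
          exact ⟨t, Finset.mem_filter.mpr ⟨Finset.mem_range.mpr ht1, ht2⟩⟩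
        set t := T.min' hTne with ht
        have htT : t ∈ T := Finset.min'_mem _ _
        have htk : t < k := by
          have := (Finset.mem_filter.mp htT).1; simpa using this
        have hnt : Hor t := (Finset.mem_filter.mp htT).2
        have htmin : ∀ s, s < t → ¬ Hor s := by
          intro s h1s hcs
          have hsT : s ∈ T := Finset.mem_filter.mpr ⟨Finset.mem_range.mpr (by omega), hcs⟩
          have := Finset.min'_le T s hsT; omega
        have ht0 : 0 < t := by
          rcases Nat.eq_zero_or_pos t with h | h
          · exact absurd (h ▸ hnt) h0
          · exact h
        have hseg2 : ∀ s, t ≤ s → s < k → Hor s := by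
          by_contra hcon
          push_neg at hcon
          obtain ⟨s, hts, hsk, hs⟩ := hcon
          set T2 := (Finset.Ioo t k).filter (fun u => ¬ Hor u) with hT2
          have hT2ne : T2.Nonempty := by
            refine ⟨s, Finset.mem_filter.mpr ⟨Finset.mem_Ioo.mpr ⟨?_, hsk⟩, hs⟩⟩
            rcases eq_or_lt_of_le hts with rfl | h; · exact absurd hnt hs
            · exact h
          set s0 := T2.min' hT2ne with hs0
          have hs0T : s0 ∈ T2 := Finset.min'_mem _ _
          have hs0mem := Finset.mem_filter.mp hs0T
          have hs0Ioo := Finset.mem_Ioo.mp hs0mem.1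
          have hs0H : ¬ Hor s0 := hs0mem.2
          have hprev : Hor (s0 - 1) := by
            rcases Nat.eq_or_lt_of_le (Nat.succ_le_of_lt hs0Ioo.1) with h | h
            · have : s0 - 1 = t := by omega
              rw [this]; exact hnt
            · by_contra hcH
              have : s0 - 1 ∈ T2 := Finset.mem_filter.mpr
                ⟨Finset.mem_Ioo.mpr ⟨by omega, by omega⟩, hcH⟩
              have := Finset.min'_le T2 _ this; omega
          exact two_turns t s0 ht0 hs0Ioo.1 hs0Ioo.2
            (by intro hiff; exact htmin (t-1) (by omega) (hiff.mpr hnt))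
            (by intro hiff; exact hs0H (hiff.mp hprev))
        have hcolc : (c t).2 = (c 0).2 := by
          refine const2 0 t (fun s _ h2s => ?_) t (Nat.zero_le _) le_rfl
          rcases hstep s (by omega) with ⟨hH, _⟩ | ⟨_, hE⟩
          · exact absurd hH (htmin s h2s)
          · exact hE
        have hrowc : (c k).1 = (c t).1 :=
          const1 t k (fun s hs1 hs2 => hseg2 s hs1 hs2) k (le_of_lt htk) le_rfl
        have hct : c t = (i', j) := by
          have e1 : (c t).1 = i' := by rw [← hrowc, hck]
          have e2 : (c t).2 = j := by rw [hcolc, hc0]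
          exact Prod.ext e1 e2
        right; rw [← hct]; exact hmem t (le_of_lt htk)
      · push_neg at hex
        have : (c k).2 = (c 0).2 := by
          refine const2 0 k (fun s _ h2s => ?_) k (Nat.zero_le _) le_rfl
          rcases hstep s h2s with ⟨hH, _⟩ | ⟨_, hE⟩
          · exact absurd hH (hex s h2s)
          · exact hE
        rw [hck, hc0] at this
        have e : j' = j := this
        left; rw [e]; exact h1

/-- sorting relation: descending by weight `w`, ties broken by `≤`. -/
def wrel (w : ℤ → ℕ) (a b : ℤ) : Prop := w b < w a ∨ (w a = w b ∧ a ≤ b)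

instance (w : ℤ → ℕ) : DecidableRel (wrel w) := fun _ _ => by unfold wrel; infer_instance
instance (w : ℤ → ℕ) : IsTrans ℤ (wrel w) := ⟨by intro a b c h1 h2; unfold wrel at *; omega⟩
instance (w : ℤ → ℕ) : IsAntisymm ℤ (wrel w) := ⟨by intro a b h1 h2; unfold wrel at *; omega⟩
instance (w : ℤ → ℕ) : IsTotal ℤ (wrel w) := ⟨by intro a b; unfold wrel; omega⟩

lemma sorted_indexOf_rel {w : ℤ → ℕ} {S : Finset ℤ} {x y : ℤ} (hx : x ∈ S) (hy : y ∈ S)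
    (hlt : (Finset.sort S (wrel w)).idxOf x < (Finset.sort S (wrel w)).idxOf y) :
    wrel w x y := by
  set M := Finset.sort S (wrel w) with hM
  have h1 : M.idxOf x < M.length := List.idxOf_lt_length_iff.mpr ((Finset.mem_sort _).mpr hx)
  have h2 : M.idxOf y < M.length := List.idxOf_lt_length_iff.mpr ((Finset.mem_sort _).mpr hy)
  have := (Finset.pairwise_sort S (wrel w)).rel_get_of_lt
    (a := ⟨M.idxOf x, h1⟩) (b := ⟨M.idxOf y, h2⟩) (Fin.mk_lt_mk.mpr hlt)
  simpa [← hM, List.get_eq_getElem, List.getElem_idxOf] using this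

def colsOf (P : Finset (ℤ × ℤ)) (i : ℤ) : Finset ℤ := (P.filter (fun c => c.1 = i)).image Prod.snd
def rowsOf (P : Finset (ℤ × ℤ)) (j : ℤ) : Finset ℤ := (P.filter (fun c => c.2 = j)).image Prod.fst

lemma mem_colsOf {P : Finset (ℤ × ℤ)} {i j : ℤ} : j ∈ colsOf P i ↔ (i, j) ∈ P := by
  simp only [colsOf, Finset.mem_image, Finset.mem_filter]
  constructor
  · rintro ⟨⟨a, b⟩, ⟨hab, h1⟩, h2⟩; simp only at h1 h2; rwa [← h1, ← h2]
  · intro h; exact ⟨(i, j), ⟨h, rfl⟩, rfl⟩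

lemma mem_rowsOf {P : Finset (ℤ × ℤ)} {i j : ℤ} : i ∈ rowsOf P j ↔ (i, j) ∈ P := by
  simp only [rowsOf, Finset.mem_image, Finset.mem_filter]
  constructor
  · rintro ⟨⟨a, b⟩, ⟨hab, h1⟩, h2⟩; simp only at h1 h2; rwa [← h1, ← h2]
  · intro h; exact ⟨(i, j), ⟨h, rfl⟩, rfl⟩

lemma card_colsOf {P : Finset (ℤ × ℤ)} {i : ℤ} : (colsOf P i).card = rowCount P i := by
  refine Finset.card_image_of_injOn ?_
  intro x hx y hy hxy
  simp only [Finset.coe_filter, Set.mem_setOf_eq] at hx hy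
  exact Prod.ext (hx.2.trans hy.2.symm) hxy

lemma card_rowsOf {P : Finset (ℤ × ℤ)} {j : ℤ} : (rowsOf P j).card = colCount P j := by
  refine Finset.card_image_of_injOn ?_
  intro x hx y hy hxy
  simp only [Finset.coe_filter, Set.mem_setOf_eq] at hx hy
  exact Prod.ext hxy (hx.2.trans hy.2.symm)

lemma rows_mono {P : Finset (ℤ × ℤ)}
    (hc : ∀ i j i' j' : ℤ, (i, j) ∈ P → (i', j') ∈ P → (i, j') ∈ P ∨ (i', j) ∈ P)
    {j j' : ℤ} (hle : colCount P j ≤ colCount P j') : rowsOf P j ⊆ rowsOf P j' := by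
  have hchain : rowsOf P j ⊆ rowsOf P j' ∨ rowsOf P j' ⊆ rowsOf P j := by
    by_contra hcon
    push_neg at hcon
    obtain ⟨a, ha1, ha2⟩ := Finset.not_subset.mp hcon.1
    obtain ⟨b, hb1, hb2⟩ := Finset.not_subset.mp hcon.2
    rcases hc a j b j' (mem_rowsOf.mp ha1) (mem_rowsOf.mp hb1) with h | h
    · exact ha2 (mem_rowsOf.mpr h)
    · exact hb2 (mem_rowsOf.mpr h)
  rcases hchain with h | h
  · exact h
  · have : rowsOf P j' = rowsOf P j := by
      refine Finset.eq_of_subset_of_card_le h ?_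
      rw [card_rowsOf, card_rowsOf]; exact hle
    rw [← this]
lemma count_image_fst {P : Finset (ℤ × ℤ)} {f g : ℤ → ℤ}
    (hf : Function.Injective f) (hg : Function.Injective g) (i0 : ℤ) :
    rowCount (P.image (fun c => (f c.1, g c.2))) (f i0) = rowCount P i0 := by
  unfold rowCount
  have heq : (P.image (fun c => (f c.1, g c.2))).filter (fun c => c.1 = f i0)
       = (P.filter (fun c => c.1 = i0)).image (fun c => (f c.1, g c.2)) := by
    ext ⟨x, y⟩
    simp only [Finset.mem_filter, Finset.mem_image, Prod.mk.injEq]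
    constructor
    · rintro ⟨⟨⟨a, b⟩, hab, h1, h2⟩, h3⟩
      simp only at h1 h2 h3 ⊢
      refine ⟨(a, b), ⟨hab, ?_⟩, h1, h2⟩
      apply hf; rw [h1, h3]
    · rintro ⟨⟨a, b⟩, ⟨hab, ha⟩, h1, h2⟩
      simp only at h1 h2 ha ⊢
      exact ⟨⟨(a, b), hab, h1, h2⟩, by rw [← h1, ha]⟩
  rw [heq, Finset.card_image_of_injOn]
  intro u _ v _ huv
  exact Prod.ext (hf (congrArg Prod.fst huv)) (hg (congrArg Prod.snd huv))

lemma count_image_snd {P : Finset (ℤ × ℤ)} {f g : ℤ → ℤ}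
    (hf : Function.Injective f) (hg : Function.Injective g) (j0 : ℤ) :
    colCount (P.image (fun c => (f c.1, g c.2))) (g j0) = colCount P j0 := by
  unfold colCount
  have heq : (P.image (fun c => (f c.1, g c.2))).filter (fun c => c.2 = g j0)
       = (P.filter (fun c => c.2 = j0)).image (fun c => (f c.1, g c.2)) := by
    ext ⟨x, y⟩
    simp only [Finset.mem_filter, Finset.mem_image, Prod.mk.injEq]
    constructor
    · rintro ⟨⟨⟨a, b⟩, hab, h1, h2⟩, h3⟩
      simp only at h1 h2 h3 ⊢
      refine ⟨(a, b), ⟨hab, ?_⟩, h1, h2⟩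
      apply hg; rw [h2, h3]
    · rintro ⟨⟨a, b⟩, ⟨hab, ha⟩, h1, h2⟩
      simp only at h1 h2 ha ⊢
      exact ⟨⟨(a, b), hab, h1, h2⟩, by rw [← h2, ha]⟩
  rw [heq, Finset.card_image_of_injOn]
  intro u _ v _ huv
  exact Prod.ext (hf (congrArg Prod.fst huv)) (hg (congrArg Prod.snd huv))

lemma rowMultiset_image {P : Finset (ℤ × ℤ)} {f g : ℤ → ℤ}
    (hf : Function.Injective f) (hg : Function.Injective g) :
    rowMultiset (P.image (fun c => (f c.1, g c.2))) = rowMultiset P := by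
  unfold rowMultiset
  rw [Finset.image_image,
    show (Prod.fst ∘ fun c : ℤ × ℤ => (f c.1, g c.2)) = f ∘ Prod.fst from rfl,
    ← Finset.image_image, Finset.image_val_of_injOn (hf.injOn), Multiset.map_map]
  exact Multiset.map_congr rfl (fun i0 _ => count_image_fst hf hg i0)

lemma colMultiset_image {P : Finset (ℤ × ℤ)} {f g : ℤ → ℤ}
    (hf : Function.Injective f) (hg : Function.Injective g) :
    colMultiset (P.image (fun c => (f c.1, g c.2))) = colMultiset P := by
  unfold colMultiset
  rw [Finset.image_image,
    show (Prod.snd ∘ fun c : ℤ × ℤ => (f c.1, g c.2)) = g ∘ Prod.snd from rfl,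
    ← Finset.image_image, Finset.image_val_of_injOn (hg.injOn), Multiset.map_map]
  exact Multiset.map_congr rfl (fun j0 _ => count_image_snd hf hg j0)

/-- the rank map extended injectively to all of ℤ. -/
def rankMap (S : Finset ℤ) (Lst : List ℤ) : ℤ → ℤ :=
  fun a => if a ∈ S then ((Lst.idxOf a : ℕ) : ℤ) else -1 - (Encodable.encode a : ℤ)

lemma rankMap_injective (S : Finset ℤ) (Lst : List ℤ) (hmem : ∀ a, a ∈ Lst ↔ a ∈ S) :
    Function.Injective (rankMap S Lst) := by
  intro a b hab
  unfold rankMap at hab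
  split_ifs at hab with ha hb hb
  · exact (List.idxOf_inj ((hmem a).mpr ha)).mp (by exact_mod_cast hab)
  · have h1 : (0 : ℤ) ≤ (Lst.idxOf a : ℤ) := Int.natCast_nonneg _
    have h2 : (0 : ℤ) ≤ (Encodable.encode b : ℤ) := Int.natCast_nonneg _
    omega
  · have h1 : (0 : ℤ) ≤ (Lst.idxOf b : ℤ) := Int.natCast_nonneg _
    have h2 : (0 : ℤ) ≤ (Encodable.encode a : ℤ) := Int.natCast_nonneg _
    omega
  · have : (Encodable.encode a : ℤ) = (Encodable.encode b : ℤ) := by omega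
    exact Encodable.encode_injective (by exact_mod_cast this)

/-- For every L-convex polyomino `P` there is a Ferrer diagram `P*` — with weakly
decreasing positive row lengths given by the row lengths of `P` sorted decreasingly,
and column lengths those of `P` sorted decreasingly — such that the row-column
bipartite graphs `F_P` and `F_{P*}` are isomorphic: there are injections of rows
and columns carrying the cells of `P` exactly onto the cells of `P*`. -/
theorem stmt9 (P : Finset (ℤ × ℤ)) (hne : P.Nonempty) (hP : IsLConvex P) :
    ∃ (n : ℕ) (h : ℕ → ℕ),
      (∀ i j : ℕ, i ≤ j → j < n → h j ≤ h i) ∧ (∀ i, i < n → 0 < h i) ∧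
      rowMultiset (ferrerCellsZ n h) = rowMultiset P ∧
      colMultiset (ferrerCellsZ n h) = colMultiset P ∧
      ∃ (f g : ℤ → ℤ), Function.Injective f ∧ Function.Injective g ∧
        ∀ i j : ℤ, (i, j) ∈ P ↔ (f i, g j) ∈ ferrerCellsZ n h := by
  classical
  have hc : ∀ i j i' j' : ℤ, (i, j) ∈ P → (i', j') ∈ P → (i, j') ∈ P ∨ (i', j) ∈ P :=
    fun i j i' j' h1 h2 => cross_of_LConvex hP h1 h2
  set R := P.image Prod.fst with hR
  set C := P.image Prod.snd with hC
  set L := Finset.sort R (wrel (rowCount P)) with hL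
  set M := Finset.sort C (wrel (colCount P)) with hM
  have hLnd : L.Nodup := Finset.sort_nodup _ _
  have hMnd : M.Nodup := Finset.sort_nodup _ _
  have hLmem : ∀ a, a ∈ L ↔ a ∈ R := fun a => Finset.mem_sort _
  have hMmem : ∀ a, a ∈ M ↔ a ∈ C := fun a => Finset.mem_sort _
  set n := L.length with hn
  set hh : ℕ → ℕ := fun t => rowCount P (L.getD t 0) with hhdef
  have hdown : ∀ i0 j0 j1 : ℤ, (i0, j0) ∈ P → j1 ∈ C →
      M.idxOf j1 ≤ M.idxOf j0 → (i0, j1) ∈ P := by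
    intro i0 j0 j1 hij hj1 hle
    have hj0 : j0 ∈ C := Finset.mem_image.mpr ⟨(i0, j0), hij, rfl⟩
    rcases eq_or_lt_of_le hle with heq | hlt
    · have he : j1 = j0 := (List.idxOf_inj ((hMmem j1).mpr hj1)).mp heq
      rw [he]; exact hij
    · have hrel : wrel (colCount P) j1 j0 := sorted_indexOf_rel hj1 hj0 hlt
      have hcc : colCount P j0 ≤ colCount P j1 := by unfold wrel at hrel; omega
      exact mem_rowsOf.mp (rows_mono hc hcc (mem_rowsOf.mpr hij))
  have hcardA : ∀ j0 ∈ C,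
      (C.filter (fun j1 => M.idxOf j1 ≤ M.idxOf j0)).card = M.idxOf j0 + 1 := by
    intro j0 hj0
    have hlen : M.idxOf j0 < M.length := List.idxOf_lt_length_iff.mpr ((hMmem j0).mpr hj0)
    have him : C.filter (fun j1 => M.idxOf j1 ≤ M.idxOf j0)
        = (Finset.range (M.idxOf j0 + 1)).image (fun s => M.getD s 0) := by
      ext x
      simp only [Finset.mem_filter, Finset.mem_image, Finset.mem_range]
      constructor
      · rintro ⟨hxC, hxle⟩
        have hx : M.idxOf x < M.length := List.idxOf_lt_length_iff.mpr ((hMmem x).mpr hxC)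
        exact ⟨M.idxOf x, by omega,
          by rw [List.getD_eq_getElem _ _ hx]; exact List.getElem_idxOf hx⟩
      · rintro ⟨s, hs, rfl⟩
        have hs1 : s < M.length := by omega
        rw [List.getD_eq_getElem _ _ hs1]
        refine ⟨(hMmem _).mp (List.getElem_mem hs1), ?_⟩
        rw [List.Nodup.idxOf_getElem hMnd]; omega
    rw [him, Finset.card_image_of_injOn, Finset.card_range]
    intro s hs s' hs' he
    simp only at he
    simp only [Finset.coe_range, Set.mem_Iio] at hs hs'
    have hs1 : s < M.length := by omega
    have hs2 : s' < M.length := by omega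
    rw [List.getD_eq_getElem _ _ hs1, List.getD_eq_getElem _ _ hs2] at he
    have h1 := List.Nodup.idxOf_getElem hMnd s hs1
    have h2 := List.Nodup.idxOf_getElem hMnd s' hs2
    rw [he] at h1
    rw [h2] at h1
    exact h1.symm
  have hcolsub : ∀ i0 : ℤ, colsOf P i0 ⊆ C := by
    intro i0 x hx; exact Finset.mem_image.mpr ⟨(i0, x), mem_colsOf.mp hx, rfl⟩
  have hcrux : ∀ i0 j0 : ℤ,
      (i0, j0) ∈ P ↔ i0 ∈ R ∧ j0 ∈ C ∧ M.idxOf j0 < rowCount P i0 := by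
    intro i0 j0
    constructor
    · intro hij
      have hiR : i0 ∈ R := Finset.mem_image.mpr ⟨(i0, j0), hij, rfl⟩
      have hjC : j0 ∈ C := Finset.mem_image.mpr ⟨(i0, j0), hij, rfl⟩
      refine ⟨hiR, hjC, ?_⟩
      have hsub : C.filter (fun j1 => M.idxOf j1 ≤ M.idxOf j0) ⊆ colsOf P i0 := by
        intro x hx
        have hx' := Finset.mem_filter.mp hx
        exact mem_colsOf.mpr (hdown i0 j0 x hij hx'.1 hx'.2)
      have hle := Finset.card_le_card hsub
      rw [hcardA j0 hjC, card_colsOf] at hle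
      omega
    · rintro ⟨hiR, hjC, hlt⟩
      obtain ⟨c0, hc0P, hc00⟩ := Finset.mem_image.mp hiR
      have hne0 : (colsOf P i0).Nonempty :=
        ⟨c0.2, mem_colsOf.mpr (by rw [← hc00]; exact hc0P)⟩
      obtain ⟨jm, hjm, hmax⟩ := Finset.exists_max_image (colsOf P i0) (fun x => M.idxOf x) hne0
      have hjmP : (i0, jm) ∈ P := mem_colsOf.mp hjm
      have hjmC : jm ∈ C := Finset.mem_image.mpr ⟨(i0, jm), hjmP, rfl⟩
      have hsub : colsOf P i0 ⊆ C.filter (fun j1 => M.idxOf j1 ≤ M.idxOf jm) := by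
        intro x hx
        exact Finset.mem_filter.mpr ⟨hcolsub i0 hx, hmax x hx⟩
      have hle := Finset.card_le_card hsub
      rw [hcardA jm hjmC, card_colsOf] at hle
      exact hdown i0 jm j0 hjmP hjC (by omega)
  set f := rankMap R L with hf
  set g := rankMap C M with hg
  have hfinj : Function.Injective f := rankMap_injective R L hLmem
  have hginj : Function.Injective g := rankMap_injective C M hMmem
  have hfval : ∀ i0 ∈ R, f i0 = ((L.idxOf i0 : ℕ) : ℤ) := by
    intro i0 hmem; simp [hf, rankMap, hmem]
  have hgval : ∀ j0 ∈ C, g j0 = ((M.idxOf j0 : ℕ) : ℤ) := by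
    intro j0 hmem; simp [hg, rankMap, hmem]
  have hhval : ∀ i0 ∈ R, hh (L.idxOf i0) = rowCount P i0 := by
    intro i0 hmem
    have hx : L.idxOf i0 < L.length := List.idxOf_lt_length_iff.mpr ((hLmem i0).mpr hmem)
    simp only [hhdef]
    rw [List.getD_eq_getElem _ _ hx, List.getElem_idxOf hx]
  have hmemF : ∀ x y : ℤ, (x, y) ∈ ferrerCellsZ n hh ↔
      ∃ r, r < n ∧ ∃ s, s < hh r ∧ x = (r : ℤ) ∧ y = (s : ℤ) := by
    intro x y
    simp only [ferrerCellsZ, Finset.mem_biUnion, Finset.mem_range, Finset.mem_image,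
      Prod.mk.injEq]
    constructor
    · rintro ⟨r, hr, s, hs, hx, hy⟩; exact ⟨r, hr, s, hs, hx.symm, hy.symm⟩
    · rintro ⟨r, hr, s, hs, hx, hy⟩; exact ⟨r, hr, s, hs, hx.symm, hy.symm⟩
  have hiff : ∀ i0 j0 : ℤ, (i0, j0) ∈ P ↔ (f i0, g j0) ∈ ferrerCellsZ n hh := by
    intro i0 j0
    constructor
    · intro hij
      obtain ⟨hiR, hjC, hlt⟩ := (hcrux i0 j0).mp hij
      rw [hmemF]
      refine ⟨L.idxOf i0, List.idxOf_lt_length_iff.mpr ((hLmem i0).mpr hiR),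
        M.idxOf j0, ?_, hfval i0 hiR, hgval j0 hjC⟩
      rw [hhval i0 hiR]; exact hlt
    · intro hmem2
      rw [hmemF] at hmem2
      obtain ⟨r, hr, s, hs, hx, hy⟩ := hmem2
      by_cases hiR : i0 ∈ R
      swap
      · exfalso
        have hne : f i0 = -1 - (Encodable.encode i0 : ℤ) := by simp [hf, rankMap, hiR]
        have h2 : (0 : ℤ) ≤ (Encodable.encode i0 : ℤ) := Int.natCast_nonneg _
        have h3 : (0 : ℤ) ≤ (r : ℤ) := Int.natCast_nonneg _
        omega
      by_cases hjC : j0 ∈ C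
      swap
      · exfalso
        have hne : g j0 = -1 - (Encodable.encode j0 : ℤ) := by simp [hg, rankMap, hjC]
        have h2 : (0 : ℤ) ≤ (Encodable.encode j0 : ℤ) := Int.natCast_nonneg _
        have h3 : (0 : ℤ) ≤ (s : ℤ) := Int.natCast_nonneg _
        omega
      have hxr : L.idxOf i0 = r := by
        have he := hfval i0 hiR; rw [he] at hx; exact_mod_cast hx
      have hys : M.idxOf j0 = s := by
        have he := hgval j0 hjC; rw [he] at hy; exact_mod_cast hy
      refine (hcrux i0 j0).mpr ⟨hiR, hjC, ?_⟩
      rw [← hxr] at hs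
      rw [hhval i0 hiR] at hs
      rw [hys]
      exact hs
  have hFimg : ferrerCellsZ n hh = P.image (fun c => (f c.1, g c.2)) := by
    apply Finset.Subset.antisymm
    · intro x hxF
      obtain ⟨x1, x2⟩ := x
      rw [hmemF] at hxF
      obtain ⟨r, hr, s, hs, hx, hy⟩ := hxF
      have hrL : r < L.length := hr
      set i0 := L.getD r 0 with hi0
      have hi0R : i0 ∈ R := (hLmem i0).mp
        (by rw [hi0, List.getD_eq_getElem _ _ hrL]; exact List.getElem_mem hrL)
      have hidx : L.idxOf i0 = r := by
        rw [hi0, List.getD_eq_getElem _ _ hrL]; exact List.Nodup.idxOf_getElem hLnd r hrL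
      have hhr : hh r = rowCount P i0 := rfl
      have hs' : s < rowCount P i0 := hhr ▸ hs
      have hsM : s < M.length := by
        have h1 : rowCount P i0 ≤ C.card := by
          rw [← card_colsOf]; exact Finset.card_le_card (hcolsub i0)
        have h2 : M.length = C.card := Finset.length_sort _
        omega
      set j0 := M.getD s 0 with hj0
      have hj0C : j0 ∈ C := (hMmem j0).mp
        (by rw [hj0, List.getD_eq_getElem _ _ hsM]; exact List.getElem_mem hsM)
      have hjdx : M.idxOf j0 = s := by
        rw [hj0, List.getD_eq_getElem _ _ hsM]; exact List.Nodup.idxOf_getElem hMnd s hsM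
      have hP0 : (i0, j0) ∈ P := by
        refine (hcrux i0 j0).mpr ⟨hi0R, hj0C, ?_⟩
        rw [hjdx]; exact hs'
      refine Finset.mem_image.mpr ⟨(i0, j0), hP0, ?_⟩
      have e1 : f i0 = x1 := by rw [hfval i0 hi0R, hidx, ← hx]
      have e2 : g j0 = x2 := by rw [hgval j0 hj0C, hjdx, ← hy]
      simp only
      rw [e1, e2]
    · intro x hx
      obtain ⟨⟨a, b⟩, hab, rfl⟩ := Finset.mem_image.mp hx
      exact (hiff a b).mp hab
  refine ⟨n, hh, ?_, ?_, ?_, ?_, f, g, hfinj, hginj, hiff⟩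
  · intro a b hab hbn
    rcases eq_or_lt_of_le hab with rfl | hltab
    · exact le_refl _
    · have hbL : b < L.length := hbn
      have haL : a < L.length := by omega
      have hsortedL : L.Pairwise (wrel (rowCount P)) := by
        rw [hL]; exact Finset.pairwise_sort _ _
      have hrel := hsortedL.rel_get_of_lt
        (a := ⟨a, haL⟩) (b := ⟨b, hbL⟩) (Fin.mk_lt_mk.mpr hltab)
      simp only [List.get_eq_getElem] at hrel
      have e1 : hh a = rowCount P L[a] := by
        simp only [hhdef]; rw [List.getD_eq_getElem _ _ haL]
      have e2 : hh b = rowCount P L[b] := by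
        simp only [hhdef]; rw [List.getD_eq_getElem _ _ hbL]
      rw [e1, e2]
      unfold wrel at hrel
      omega
  · intro b hbn
    have hbL : b < L.length := hbn
    have hbR : L[b] ∈ R := (hLmem _).mp (List.getElem_mem hbL)
    obtain ⟨c0, hc0P, hc00⟩ := Finset.mem_image.mp hbR
    have hpos : 0 < rowCount P (L[b]) :=
      Finset.card_pos.mpr ⟨c0, Finset.mem_filter.mpr ⟨hc0P, hc00⟩⟩
    have e3 : hh b = rowCount P L[b] := by
      simp only [hhdef]; rw [List.getD_eq_getElem _ _ hbL]
    rw [e3]; exact hpos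
  · rw [hFimg]; exact rowMultiset_image hfinj hginj
  · rw [hFimg]; exact colMultiset_image hfinj hginj
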